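/- For all positive integers i, j, k with i < j < k and i + j ≠ k, the Hirzebruch L-polynomial coefficients satisfy h_{i,j,k} + h_{i+j,k} + h_{i+k,j} + h_{j+k,i} + h_{i+j+k} = h_i · h_j · h_k. -/

import Mathlib

open MvPolynomial

noncomputable section

/-- The total Pontryagin-class variable of the first factor: `p'_k`,
with `p'_0 = 1`.  Variables are indexed by positive integers `k`. -/
def pFst (k : ℕ) : MvPolynomial (ℕ ⊕ ℕ) ℚ := if k = 0 then 1 else X (Sum.inl k)

/-- `p''_k` for the second factor, with `p''_0 = 1`. -/
def pSnd (k : ℕ) : MvPolynomial (ℕ ⊕ ℕ) ℚ := if k = 0 then 1 else X (Sum.inr k)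

/-- The `k`-th Pontryagin class of a product, via the Whitney formula:
`p_k = ∑_{a+b=k} p'_a p''_b`. -/
def pProd (k : ℕ) : MvPolynomial (ℕ ⊕ ℕ) ℚ :=
  ∑ a ∈ Finset.range (k + 1), pFst a * pSnd (k - a)

/-- A multiplicative sequence of polynomials `L_n` in the variables
`p_1, p_2, …` (variable `k ≥ 1` of `MvPolynomial ℕ ℚ` stands for `p_k`;
variable `0` is unused): `L_0 = 1`, each `L_n` is homogeneous of weighted
degree `n` (where `p_k` has weight `k`), and the sequence satisfies
`L_n(p(ξ×η)) = ∑_{i+j=n} L_i(p(ξ)) L_j(p(η))`.  The Hirzebruch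
`L`-polynomials (associated to `√t/tanh √t`) form such a sequence. -/
def IsMultiplicativeSeq (L : ℕ → MvPolynomial ℕ ℚ) : Prop :=
  L 0 = 1 ∧
  (∀ n d, coeff d (L n) ≠ 0 → d 0 = 0) ∧
  (∀ n d, coeff d (L n) ≠ 0 → (d.sum fun k e => k * e) = n) ∧
  (∀ n, aeval pProd (L n) =
    ∑ i ∈ Finset.range (n + 1), aeval pFst (L i) * aeval pSnd (L (n - i)))

/-- `h_i`: the coefficient of `p_i` in `L_i`. -/
def h1 (L : ℕ → MvPolynomial ℕ ℚ) (i : ℕ) : ℚ :=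
  coeff (Finsupp.single i 1) (L i)

/-- `h_{i,j}`: the coefficient of `p_i p_j` in `L_{i+j}` (of `p_i²` in `L_{2i}` if `i = j`). -/
def h2 (L : ℕ → MvPolynomial ℕ ℚ) (i j : ℕ) : ℚ :=
  coeff (Finsupp.single i 1 + Finsupp.single j 1) (L (i + j))

/-- `h_{i,j,k}`: the coefficient of `p_i p_j p_k` in `L_{i+j+k}`. -/
def h3 (L : ℕ → MvPolynomial ℕ ℚ) (i j k : ℕ) : ℚ :=
  coeff (Finsupp.single i 1 + Finsupp.single j 1 + Finsupp.single k 1) (L (i + j + k))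

end

set_option linter.unusedSectionVars false
set_option linter.unusedVariables false

section AuxG


noncomputable section AuxGen
variable {σ : Type*} [DecidableEq σ]

lemma prodMonomialAux (s : Finset ℕ) (g : ℕ → (σ →₀ ℕ)) (a : ℕ → ℚ) :
    (∏ m ∈ s, monomial (g m) (a m)) = monomial (∑ m ∈ s, g m) (∏ m ∈ s, a m) := by
  induction s using Finset.induction_on with
  | empty => simp [monomial_zero']
  | @insert x s hx ih =>
      rw [Finset.prod_insert hx, ih, Finset.sum_insert hx, Finset.prod_insert hx, monomial_mul]

lemma prodMonomial (d : ℕ →₀ ℕ) (E : ℕ → (σ →₀ ℕ)) (c : ℕ → ℚ) :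
    (d.prod fun m e => (monomial (E m) (c m)) ^ e) =
      monomial (d.sum fun m e => e • E m) (d.prod fun m e => c m ^ e) := by
  rw [Finsupp.prod, Finsupp.prod, Finsupp.sum]
  simp_rw [monomial_pow]
  exact prodMonomialAux _ _ _

lemma coeff_aeval_mono (E : ℕ → (σ →₀ ℕ)) (c : ℕ → ℚ) (P : MvPolynomial ℕ ℚ) (M : σ →₀ ℕ) :
    coeff M (aeval (fun m => monomial (E m) (c m)) P) =
      ∑ d ∈ P.support, coeff d P *
        (if (d.sum fun m e => e • E m) = M then (d.prod fun m e => c m ^ e) else 0) := by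
  conv_lhs => rw [← P.support_sum_monomial_coeff]
  rw [map_sum (aeval fun m => monomial (E m) (c m)) _ P.support, coeff_sum]
  refine Finset.sum_congr rfl fun d _ => ?_
  rw [aeval_monomial, prodMonomial, algebraMap_eq, coeff_C_mul, coeff_monomial]

lemma sum_support_eq (P : MvPolynomial ℕ ℚ) (I : (ℕ →₀ ℕ) → ℚ) (T : Finset (ℕ →₀ ℕ))
    (hin : ∀ d, coeff d P ≠ 0 → I d ≠ 0 → d ∈ T) (hone : ∀ d ∈ T, I d = 1) :
    (∑ d ∈ P.support, coeff d P * I d) = ∑ d ∈ T, coeff d P := by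
  classical
  have e1 : ∑ d ∈ P.support, coeff d P * I d = ∑ d ∈ P.support ∪ T, coeff d P * I d := by
    apply Finset.sum_subset Finset.subset_union_left
    intro d _ hd
    rw [notMem_support_iff.mp hd, zero_mul]
  have e2 : ∑ d ∈ P.support ∪ T, coeff d P * I d = ∑ d ∈ T, coeff d P * I d := by
    symm
    apply Finset.sum_subset Finset.subset_union_right
    intro d _ hdT
    by_cases hc : coeff d P = 0
    · rw [hc, zero_mul]
    · by_cases hI : I d = 0
      · rw [hI, mul_zero]
      · exact absurd (hin d hc hI) hdT
  rw [e1, e2]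
  exact Finset.sum_congr rfl fun d hd => by rw [hone d hd, mul_one]

lemma coeff_mul_split (SP SQ : Set σ) (hdisj : ∀ s, s ∈ SP → s ∈ SQ → False)
    (P Q : MvPolynomial σ ℚ) (M1 M2 : σ →₀ ℕ)
    (hP : ∀ u, coeff u P ≠ 0 → ∀ s, u s ≠ 0 → s ∈ SP)
    (hQ : ∀ v, coeff v Q ≠ 0 → ∀ s, v s ≠ 0 → s ∈ SQ)
    (hM1 : ∀ s, M1 s ≠ 0 → s ∈ SP) (hM2 : ∀ s, M2 s ≠ 0 → s ∈ SQ) :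
    coeff (M1 + M2) (P * Q) = coeff M1 P * coeff M2 Q := by
  classical
  rw [coeff_mul]
  refine Finset.sum_eq_single_of_mem (M1, M2) (Finset.HasAntidiagonal.mem_antidiagonal.mpr rfl) ?_
  rintro ⟨u, v⟩ hmem hne
  rw [Finset.HasAntidiagonal.mem_antidiagonal] at hmem
  by_contra hterm
  have hu : coeff u P ≠ 0 := left_ne_zero_of_mul hterm
  have hv : coeff v Q ≠ 0 := right_ne_zero_of_mul hterm
  have huM : u = M1 := by
    ext s
    by_cases hs : s ∈ SP
    · have hv0 : v s = 0 := by
        by_contra h; exact hdisj s hs (hQ v hv s h)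
      have hM2s : M2 s = 0 := by
        by_contra h; exact hdisj s hs (hM2 s h)
      have := DFunLike.congr_fun hmem s
      simp only [Finsupp.add_apply, hv0, hM2s, add_zero] at this
      exact this
    · have hu0 : u s = 0 := by
        by_contra h; exact hs (hP u hu s h)
      have hM10 : M1 s = 0 := by
        by_contra h; exact hs (hM1 s h)
      rw [hu0, hM10]
  have hvM : v = M2 := by
    have := hmem
    rw [huM] at this
    exact add_left_cancel this
  exact hne (Prod.ext huM hvM)

lemma aeval_mono_support (E : ℕ → (σ →₀ ℕ)) (c : ℕ → ℚ) (P : MvPolynomial ℕ ℚ)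
    (SP : Set σ) (hE : ∀ m s, (E m) s ≠ 0 → s ∈ SP) :
    ∀ u, coeff u (aeval (fun m => monomial (E m) (c m)) P) ≠ 0 → ∀ s, u s ≠ 0 → s ∈ SP := by
  intro u hu s hs
  rw [coeff_aeval_mono] at hu
  obtain ⟨d, -, hd⟩ := Finset.exists_ne_zero_of_sum_ne_zero hu
  by_contra hsP
  have hcond : (d.sum fun m e => e • E m) = u := by
    by_contra h
    rw [if_neg h, mul_zero] at hd
    exact hd rfl
  apply hs
  rw [← hcond, Finsupp.sum_apply]
  refine Finset.sum_eq_zero fun m _ => ?_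
  have hE0 : (E m) s = 0 := by
    by_contra h; exact hsP (hE m s h)
  simp [hE0]

end AuxGen

end AuxG

noncomputable section Conc

def ee0 : Fin 3 →₀ ℕ := Finsupp.single 0 1
def ee1 : Fin 3 →₀ ℕ := Finsupp.single 1 1
def ee2 : Fin 3 →₀ ℕ := Finsupp.single 2 1

lemma X0_eq : (X 0 : MvPolynomial (Fin 3) ℚ) = monomial ee0 1 := by
  rw [ee0, X, monomial_eq_monomial_iff] ; left; exact ⟨rfl, rfl⟩

lemma X1_eq : (X 1 : MvPolynomial (Fin 3) ℚ) = monomial ee1 1 := rfl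
lemma X2_eq : (X 2 : MvPolynomial (Fin 3) ℚ) = monomial ee2 1 := rfl

def EA (i j k m : ℕ) : Fin 3 →₀ ℕ :=
  if m = i then ee0 else if m = j then ee1 else if m = k then ee2
  else if m = i + k then ee0 + ee2 else if m = j + k then ee1 + ee2 else 0
def cA (i j k m : ℕ) : ℚ :=
  if m = 0 ∨ m = i ∨ m = j ∨ m = k ∨ m = i + k ∨ m = j + k then 1 else 0

def EF (i j m : ℕ) : Fin 3 →₀ ℕ := if m = i then ee0 else if m = j then ee1 else 0
def cF (i j m : ℕ) : ℚ := if m = 0 ∨ m = i ∨ m = j then 1 else 0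
def ES (k m : ℕ) : Fin 3 →₀ ℕ := if m = k then ee2 else 0
def cS (k m : ℕ) : ℚ := if m = 0 ∨ m = k then 1 else 0

def psiA (i j k : ℕ) : ℕ ⊕ ℕ → MvPolynomial (Fin 3) ℚ :=
  Sum.elim (fun m => if m = i then X 0 else if m = j then X 1 else 0)
           (fun m => if m = k then X 2 else 0)

section
variable {i j k : ℕ} (hi : 0 < i) (hij : i < j) (hjk : j < k)

include hi hij in
lemma psiA_pFst (m : ℕ) : aeval (psiA i j k) (pFst m) = monomial (EF i j m) (cF i j m) := by
  rw [pFst, EF, cF]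
  by_cases h0 : m = 0
  · subst h0
    rw [if_pos rfl, if_neg (by omega), if_neg (by omega), if_pos (by tauto), map_one]
    simp [monomial_zero']
  rw [if_neg h0, aeval_X]
  show Sum.elim _ _ _ = _
  rw [Sum.elim_inl]
  by_cases h1 : m = i
  · rw [if_pos h1, if_pos h1, if_pos (by tauto), X0_eq]
  rw [if_neg h1, if_neg h1]
  by_cases h2 : m = j
  · rw [if_pos h2, if_pos h2, if_pos (by tauto), X1_eq]
  rw [if_neg h2, if_neg h2, if_neg (by tauto), monomial_zero]

include hi hij hjk in
lemma psiA_pSnd (m : ℕ) : aeval (psiA i j k) (pSnd m) = monomial (ES k m) (cS k m) := by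
  rw [pSnd, ES, cS]
  by_cases h0 : m = 0
  · subst h0
    rw [if_pos rfl, if_neg (by omega), if_pos (by tauto), map_one]
    simp [monomial_zero']
  rw [if_neg h0, aeval_X]
  show Sum.elim _ _ _ = _
  rw [Sum.elim_inr]
  by_cases h1 : m = k
  · rw [if_pos h1, if_pos h1, if_pos (by tauto), X2_eq]
  rw [if_neg h1, if_neg h1, if_neg (by tauto), monomial_zero]

end
end Conc

noncomputable section Conc2
variable {i j k : ℕ}

lemma psiA_pProd (hi : 0 < i) (hij : i < j) (hjk : j < k) (hsum : i + j ≠ k) (m : ℕ) :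
    aeval (psiA i j k) (pProd m) = monomial (EA i j k m) (cA i j k m) := by
  rw [pProd, map_sum]
  have hterm : ∀ x, aeval (psiA i j k) (pFst x * pSnd (m - x)) =
      monomial (EF i j x + ES k (m - x)) (cF i j x * cS k (m - x)) := fun x => by
    rw [map_mul, psiA_pFst hi hij, psiA_pSnd hi hij hjk, monomial_mul]
  simp_rw [hterm]
  by_cases hm0 : m = 0
  · rw [hm0, Finset.sum_range_one, EA, if_neg (by omega), if_neg (by omega), if_neg (by omega),
      if_neg (by omega), if_neg (by omega), cA, if_pos (by tauto), Nat.sub_self,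
      EF, if_neg (by omega), if_neg (by omega), ES, if_neg (by omega),
      cF, if_pos (by tauto), cS, if_pos (by tauto)]
    norm_num
  by_cases hmi : m = i
  · rw [Finset.sum_eq_single_of_mem i (by rw [Finset.mem_range]; omega)]
    · rw [show m - i = 0 from by omega, EF, if_pos rfl, ES, if_neg (by omega),
        cF, if_pos (by tauto), cS, if_pos (by tauto), EA, if_pos hmi, cA, if_pos (by tauto)]
      norm_num
    · intro x hx hne
      rw [Finset.mem_range] at hx
      suffices hc : cF i j x * cS k (m - x) = 0 by rw [hc, monomial_zero]
      rw [cF, cS]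
      split_ifs <;> first | (exfalso; omega) | norm_num
  by_cases hmj : m = j
  · rw [Finset.sum_eq_single_of_mem j (by rw [Finset.mem_range]; omega)]
    · rw [show m - j = 0 from by omega, EF, if_neg (by omega), if_pos rfl, ES, if_neg (by omega),
        cF, if_pos (by tauto), cS, if_pos (by tauto),
        EA, if_neg (by omega), if_pos hmj, cA, if_pos (by tauto)]
      norm_num
    · intro x hx hne
      rw [Finset.mem_range] at hx
      suffices hc : cF i j x * cS k (m - x) = 0 by rw [hc, monomial_zero]
      rw [cF, cS]
      split_ifs <;> first | (exfalso; omega) | norm_num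
  by_cases hmk : m = k
  · rw [Finset.sum_eq_single_of_mem 0 (by rw [Finset.mem_range]; omega)]
    · rw [Nat.sub_zero, EF, if_neg (by omega), if_neg (by omega), ES, if_pos hmk,
        cF, if_pos (by tauto), cS, if_pos (by tauto),
        EA, if_neg (by omega), if_neg (by omega), if_pos hmk, cA, if_pos (by tauto)]
      norm_num
    · intro x hx hne
      rw [Finset.mem_range] at hx
      suffices hc : cF i j x * cS k (m - x) = 0 by rw [hc, monomial_zero]
      rw [cF, cS]
      split_ifs <;> first | (exfalso; omega) | norm_num
  by_cases hmik : m = i + k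
  · rw [Finset.sum_eq_single_of_mem i (by rw [Finset.mem_range]; omega)]
    · rw [show m - i = k from by omega, EF, if_pos rfl, ES, if_pos rfl,
        cF, if_pos (by tauto), cS, if_pos (by tauto),
        EA, if_neg (by omega), if_neg (by omega), if_neg (by omega), if_pos hmik,
        cA, if_pos (by tauto)]
      norm_num
    · intro x hx hne
      rw [Finset.mem_range] at hx
      suffices hc : cF i j x * cS k (m - x) = 0 by rw [hc, monomial_zero]
      rw [cF, cS]
      split_ifs <;> first | (exfalso; omega) | norm_num
  by_cases hmjk : m = j + k
  · rw [Finset.sum_eq_single_of_mem j (by rw [Finset.mem_range]; omega)]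
    · rw [show m - j = k from by omega, EF, if_neg (by omega), if_pos rfl, ES, if_pos rfl,
        cF, if_pos (by tauto), cS, if_pos (by tauto),
        EA, if_neg (by omega), if_neg (by omega), if_neg (by omega), if_neg (by omega),
        if_pos hmjk, cA, if_pos (by tauto)]
      norm_num
    · intro x hx hne
      rw [Finset.mem_range] at hx
      suffices hc : cF i j x * cS k (m - x) = 0 by rw [hc, monomial_zero]
      rw [cF, cS]
      split_ifs <;> first | (exfalso; omega) | norm_num
  · rw [EA, if_neg hmi, if_neg hmj, if_neg hmk, if_neg hmik, if_neg hmjk,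
      cA, if_neg (by tauto), monomial_zero]
    refine Finset.sum_eq_zero fun x hx => ?_
    rw [Finset.mem_range] at hx
    suffices hc : cF i j x * cS k (m - x) = 0 by rw [hc, monomial_zero]
    rw [cF, cS]
    split_ifs <;> first | (exfalso; omega) | norm_num

end Conc2

noncomputable section ConcB
variable {a b : ℕ}

def psiB (a b : ℕ) : ℕ ⊕ ℕ → MvPolynomial (Fin 3) ℚ :=
  Sum.elim (fun m => if m = a then X 0 else 0) (fun m => if m = b then X 1 else 0)

def EB (a b m : ℕ) : Fin 3 →₀ ℕ :=
  if m = a then ee0 else if m = b then ee1 else if m = a + b then ee0 + ee1 else 0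
def cB (a b m : ℕ) : ℚ := if m = 0 ∨ m = a ∨ m = b ∨ m = a + b then 1 else 0
def EFB (a m : ℕ) : Fin 3 →₀ ℕ := if m = a then ee0 else 0
def cFB (a m : ℕ) : ℚ := if m = 0 ∨ m = a then 1 else 0
def ESB (b m : ℕ) : Fin 3 →₀ ℕ := if m = b then ee1 else 0
def cSB (b m : ℕ) : ℚ := if m = 0 ∨ m = b then 1 else 0

lemma psiB_pFst (ha : 0 < a) (m : ℕ) :
    aeval (psiB a b) (pFst m) = monomial (EFB a m) (cFB a m) := by
  rw [pFst, EFB, cFB]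
  by_cases h0 : m = 0
  · rw [h0, if_pos rfl, if_neg (by omega), if_pos (by tauto), map_one]
    simp [monomial_zero']
  rw [if_neg h0, aeval_X]
  show Sum.elim _ _ _ = _
  rw [Sum.elim_inl]
  by_cases h1 : m = a
  · rw [if_pos h1, if_pos h1, if_pos (by tauto), X0_eq]
  rw [if_neg h1, if_neg h1, if_neg (by tauto), monomial_zero]

lemma psiB_pSnd (hb : 0 < b) (m : ℕ) :
    aeval (psiB a b) (pSnd m) = monomial (ESB b m) (cSB b m) := by
  rw [pSnd, ESB, cSB]
  by_cases h0 : m = 0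
  · rw [h0, if_pos rfl, if_neg (by omega), if_pos (by tauto), map_one]
    simp [monomial_zero']
  rw [if_neg h0, aeval_X]
  show Sum.elim _ _ _ = _
  rw [Sum.elim_inr]
  by_cases h1 : m = b
  · rw [if_pos h1, if_pos h1, if_pos (by tauto), X1_eq]
  rw [if_neg h1, if_neg h1, if_neg (by tauto), monomial_zero]

lemma psiB_pProd (ha : 0 < a) (hb : 0 < b) (hab : a ≠ b) (m : ℕ) :
    aeval (psiB a b) (pProd m) = monomial (EB a b m) (cB a b m) := by
  rw [pProd, map_sum]
  have hterm : ∀ x, aeval (psiB a b) (pFst x * pSnd (m - x)) =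
      monomial (EFB a x + ESB b (m - x)) (cFB a x * cSB b (m - x)) := fun x => by
    rw [map_mul, psiB_pFst ha, psiB_pSnd hb, monomial_mul]
  simp_rw [hterm]
  by_cases hm0 : m = 0
  · rw [hm0, Finset.sum_range_one, EB, if_neg (by omega), if_neg (by omega), if_neg (by omega),
      cB, if_pos (by tauto), Nat.sub_self,
      EFB, if_neg (by omega), ESB, if_neg (by omega), cFB, if_pos (by tauto),
      cSB, if_pos (by tauto)]
    norm_num
  by_cases hma : m = a
  · rw [Finset.sum_eq_single_of_mem a (by rw [Finset.mem_range]; omega)]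
    · rw [show m - a = 0 from by omega, EFB, if_pos rfl, ESB, if_neg (by omega),
        cFB, if_pos (by tauto), cSB, if_pos (by tauto), EB, if_pos hma, cB, if_pos (by tauto)]
      norm_num
    · intro x hx hne
      rw [Finset.mem_range] at hx
      suffices hc : cFB a x * cSB b (m - x) = 0 by rw [hc, monomial_zero]
      rw [cFB, cSB]
      split_ifs <;> first | (exfalso; omega) | norm_num
  by_cases hmb : m = b
  · rw [Finset.sum_eq_single_of_mem 0 (by rw [Finset.mem_range]; omega)]
    · rw [Nat.sub_zero, EFB, if_neg (by omega), ESB, if_pos hmb,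
        cFB, if_pos (by tauto), cSB, if_pos (by tauto),
        EB, if_neg (by omega), if_pos hmb, cB, if_pos (by tauto)]
      norm_num
    · intro x hx hne
      rw [Finset.mem_range] at hx
      suffices hc : cFB a x * cSB b (m - x) = 0 by rw [hc, monomial_zero]
      rw [cFB, cSB]
      split_ifs <;> first | (exfalso; omega) | norm_num
  by_cases hmab : m = a + b
  · rw [Finset.sum_eq_single_of_mem a (by rw [Finset.mem_range]; omega)]
    · rw [show m - a = b from by omega, EFB, if_pos rfl, ESB, if_pos rfl,
        cFB, if_pos (by tauto), cSB, if_pos (by tauto),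
        EB, if_neg (by omega), if_neg (by omega), if_pos hmab, cB, if_pos (by tauto)]
      norm_num
    · intro x hx hne
      rw [Finset.mem_range] at hx
      suffices hc : cFB a x * cSB b (m - x) = 0 by rw [hc, monomial_zero]
      rw [cFB, cSB]
      split_ifs <;> first | (exfalso; omega) | norm_num
  · rw [EB, if_neg hma, if_neg hmb, if_neg hmab, cB, if_neg (by tauto), monomial_zero]
    refine Finset.sum_eq_zero fun x hx => ?_
    rw [Finset.mem_range] at hx
    suffices hc : cFB a x * cSB b (m - x) = 0 by rw [hc, monomial_zero]
    rw [cFB, cSB]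
    split_ifs <;> first | (exfalso; omega) | norm_num

end ConcB


noncomputable section CoeffExtract

lemma single3_ne {t s : Fin 3} (h : (Finsupp.single t 1 : Fin 3 →₀ ℕ) s ≠ 0) : s = t := by
  rw [Finsupp.single_apply] at h
  split_ifs at h with hs
  · exact hs.symm
  · exact absurd rfl h

lemma coeff_aeval_one (t : Fin 3) (a : ℕ) (ha : 0 < a) (E : ℕ → (Fin 3 →₀ ℕ)) (c : ℕ → ℚ)
    (hEdef : ∀ m, E m = if m = a then Finsupp.single t 1 else 0)
    (hcdef : ∀ m, c m = if m = 0 ∨ m = a then 1 else 0)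
    (P : MvPolynomial ℕ ℚ) (hP0 : ∀ d, coeff d P ≠ 0 → d 0 = 0) :
    coeff (Finsupp.single t 1) (aeval (fun m => monomial (E m) (c m)) P) =
      coeff (Finsupp.single a 1) P := by
  rw [coeff_aeval_mono,
    sum_support_eq P _ {Finsupp.single a 1} ?hin ?hone, Finset.sum_singleton]
  case hone =>
    intro d hd
    rw [Finset.mem_singleton] at hd
    subst hd
    rw [Finsupp.sum_single_index (h := fun m e => e • E m) (zero_smul ℕ (E a)), Finsupp.prod_single_index (h := fun m e => c m ^ e) (pow_zero (c a)),
      hEdef, if_pos rfl, one_smul, if_pos rfl, hcdef, if_pos (by tauto), pow_one]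
  case hin =>
    intro d hc hI
    have h00 : d 0 = 0 := hP0 d hc
    by_cases hcond : (d.sum fun m e => e • E m) = Finsupp.single t 1
    swap
    · rw [if_neg hcond] at hI; exact absurd rfl hI
    rw [if_pos hcond] at hI
    have hsupp : d.support ⊆ ({a} : Finset ℕ) := by
      intro m hm
      have hdm := Finsupp.mem_support_iff.mp hm
      have hcm : c m ≠ 0 := by
        intro hc0
        apply hI
        rw [Finsupp.prod]
        exact Finset.prod_eq_zero hm (by rw [hc0]; exact zero_pow hdm)
      have hmor : m = 0 ∨ m = a := by
        by_contra hmem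
        rw [hcdef, if_neg hmem] at hcm
        exact hcm rfl
      rw [Finset.mem_singleton]
      rcases hmor with h | h
      · exact absurd (h ▸ h00) hdm
      · exact h
    rw [Finsupp.sum_of_support_subset d hsupp (fun m e => e • E m)
        (fun x _ => zero_smul ℕ (E x)),
      Finset.sum_singleton, hEdef, if_pos rfl] at hcond
    have c0 := DFunLike.congr_fun hcond t
    simp only [Finsupp.smul_apply, Finsupp.single_eq_same, smul_eq_mul, mul_one] at c0
    have hd : d = Finsupp.single a (d a) := by
      conv_lhs => rw [← Finsupp.sum_single d]
      rw [Finsupp.sum_of_support_subset d hsupp _ (fun x _ => Finsupp.single_zero x),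
        Finset.sum_singleton]
    rw [Finset.mem_singleton, hd, c0]

lemma coeff_aeval_two (t1 t2 : Fin 3) (htt : t1 ≠ t2) (a b : ℕ) (ha : 0 < a) (hb : 0 < b)
    (hab : a ≠ b) (E : ℕ → (Fin 3 →₀ ℕ)) (c : ℕ → ℚ)
    (hEdef : ∀ m, E m = if m = a then Finsupp.single t1 1 else
      if m = b then Finsupp.single t2 1 else 0)
    (hcdef : ∀ m, c m = if m = 0 ∨ m = a ∨ m = b then 1 else 0)
    (P : MvPolynomial ℕ ℚ) (hP0 : ∀ d, coeff d P ≠ 0 → d 0 = 0) :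
    coeff (Finsupp.single t1 1 + Finsupp.single t2 1)
        (aeval (fun m => monomial (E m) (c m)) P) =
      coeff (Finsupp.single a 1 + Finsupp.single b 1) P := by
  have hEa : E a = Finsupp.single t1 1 := by rw [hEdef, if_pos rfl]
  have hEb : E b = Finsupp.single t2 1 := by rw [hEdef, if_neg (by omega), if_pos rfl]
  rw [coeff_aeval_mono,
    sum_support_eq P _ {Finsupp.single a 1 + Finsupp.single b 1} ?hin ?hone,
    Finset.sum_singleton]
  case hone =>
    intro d hd
    rw [Finset.mem_singleton] at hd
    subst hd
    rw [Finsupp.sum_add_index' (fun x => zero_smul ℕ (E x))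
        (fun x e1 e2 => add_smul e1 e2 (E x)),
      Finsupp.sum_single_index (h := fun m e => e • E m) (zero_smul ℕ (E a)), Finsupp.sum_single_index (h := fun m e => e • E m) (zero_smul ℕ (E b)),
      hEa, hEb, one_smul, one_smul, if_pos rfl,
      Finsupp.prod_add_index' (fun x => pow_zero (c x)) (fun x e1 e2 => pow_add (c x) e1 e2),
      Finsupp.prod_single_index (h := fun m e => c m ^ e) (pow_zero (c a)), Finsupp.prod_single_index (h := fun m e => c m ^ e) (pow_zero (c b)),
      hcdef a, hcdef b, if_pos (by tauto), if_pos (by tauto)]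
    norm_num
  case hin =>
    intro d hc hI
    have h00 : d 0 = 0 := hP0 d hc
    by_cases hcond : (d.sum fun m e => e • E m) = Finsupp.single t1 1 + Finsupp.single t2 1
    swap
    · rw [if_neg hcond] at hI; exact absurd rfl hI
    rw [if_pos hcond] at hI
    have hsupp : d.support ⊆ ({a, b} : Finset ℕ) := by
      intro m hm
      have hdm := Finsupp.mem_support_iff.mp hm
      have hcm : c m ≠ 0 := by
        intro hc0
        apply hI
        rw [Finsupp.prod]
        exact Finset.prod_eq_zero hm (by rw [hc0]; exact zero_pow hdm)
      have hmor : m = 0 ∨ m = a ∨ m = b := by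
        by_contra hmem
        rw [hcdef, if_neg hmem] at hcm
        exact hcm rfl
      simp only [Finset.mem_insert, Finset.mem_singleton]
      rcases hmor with h | h
      · exact absurd (h ▸ h00) hdm
      · exact h
    rw [Finsupp.sum_of_support_subset d hsupp (fun m e => e • E m)
        (fun x _ => zero_smul ℕ (E x)),
      Finset.sum_insert (by simp only [Finset.mem_singleton]; omega),
      Finset.sum_singleton, hEa, hEb] at hcond
    have c1 := DFunLike.congr_fun hcond t1
    have c2 := DFunLike.congr_fun hcond t2
    simp only [Finsupp.add_apply, Finsupp.smul_apply, Finsupp.single_eq_same, smul_eq_mul,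
      mul_one, Finsupp.single_apply, if_neg htt, if_neg (Ne.symm htt), mul_zero,
      add_zero, zero_add] at c1 c2
    have hd : d = Finsupp.single a (d a) + Finsupp.single b (d b) := by
      conv_lhs => rw [← Finsupp.sum_single d]
      rw [Finsupp.sum_of_support_subset d hsupp _ (fun x _ => Finsupp.single_zero x),
        Finset.sum_insert (by simp only [Finset.mem_singleton]; omega),
        Finset.sum_singleton]
    rw [Finset.mem_singleton, hd, c1, c2]

end CoeffExtract

noncomputable section IdB

lemma idB (L : ℕ → MvPolynomial ℕ ℚ) (hL : IsMultiplicativeSeq L)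
    (a b : ℕ) (ha : 0 < a) (hb : 0 < b) (hab : a ≠ b) :
    h2 L a b + h1 L (a + b) = h1 L a * h1 L b := by
  obtain ⟨hL0, hd0, hwt, hmul⟩ := hL
  have key : coeff (ee0 + ee1) (aeval (psiB a b) (aeval pProd (L (a + b)))) =
      coeff (ee0 + ee1) (aeval (psiB a b)
        (∑ x ∈ Finset.range (a + b + 1), aeval pFst (L x) * aeval pSnd (L (a + b - x)))) := by
    rw [hmul (a + b)]
  -- LHS of key
  have hEB : (fun m => aeval (psiB a b) (pProd m)) = fun m => monomial (EB a b m) (cB a b m) :=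
    funext (psiB_pProd ha hb hab)
  rw [comp_aeval_apply pProd (aeval (psiB a b)) (L (a + b)), hEB, coeff_aeval_mono,
    sum_support_eq (L (a + b)) _
      {Finsupp.single a 1 + Finsupp.single b 1, Finsupp.single (a + b) 1} ?hin ?hone] at key
  case hone =>
    have hEBa : EB a b a = ee0 := by rw [EB, if_pos rfl]
    have hEBb : EB a b b = ee1 := by rw [EB, if_neg (by omega), if_pos rfl]
    have hEBab : EB a b (a + b) = ee0 + ee1 := by
      rw [EB, if_neg (by omega), if_neg (by omega), if_pos rfl]
    intro d hd
    rw [Finset.mem_insert, Finset.mem_singleton] at hd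
    rcases hd with hd | hd <;> subst hd
    · rw [Finsupp.sum_add_index' (fun x => zero_smul ℕ (EB a b x))
          (fun x e1 e2 => add_smul e1 e2 (EB a b x)),
        Finsupp.sum_single_index (h := fun m e => e • EB a b m) (zero_smul ℕ (EB a b a)),
        Finsupp.sum_single_index (h := fun m e => e • EB a b m) (zero_smul ℕ (EB a b b)),
        hEBa, hEBb, one_smul, one_smul, if_pos rfl,
        Finsupp.prod_add_index' (fun x => pow_zero (cB a b x))
          (fun x e1 e2 => pow_add (cB a b x) e1 e2),
        Finsupp.prod_single_index (h := fun m e => cB a b m ^ e) (pow_zero (cB a b a)),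
        Finsupp.prod_single_index (h := fun m e => cB a b m ^ e) (pow_zero (cB a b b)),
        cB, if_pos (by tauto), cB, if_pos (by tauto)]
      norm_num
    · rw [Finsupp.sum_single_index (h := fun m e => e • EB a b m) (zero_smul ℕ (EB a b (a + b))),
        hEBab, one_smul, if_pos rfl,
        Finsupp.prod_single_index (h := fun m e => cB a b m ^ e) (pow_zero (cB a b (a + b))),
        cB, if_pos (by tauto)]
      norm_num
  case hin =>
    have hEBa : EB a b a = ee0 := by rw [EB, if_pos rfl]
    have hEBb : EB a b b = ee1 := by rw [EB, if_neg (by omega), if_pos rfl]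
    have hEBab : EB a b (a + b) = ee0 + ee1 := by
      rw [EB, if_neg (by omega), if_neg (by omega), if_pos rfl]
    intro d hc hI
    have h00 : d 0 = 0 := hd0 (a + b) d hc
    by_cases hcond : (d.sum fun m e => e • EB a b m) = ee0 + ee1
    swap
    · rw [if_neg hcond] at hI; exact absurd rfl hI
    rw [if_pos hcond] at hI
    have hsupp : d.support ⊆ ({a, b, a + b} : Finset ℕ) := by
      intro m hm
      have hdm := Finsupp.mem_support_iff.mp hm
      have hcm : cB a b m ≠ 0 := by
        intro hc0
        apply hI
        rw [Finsupp.prod]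
        exact Finset.prod_eq_zero hm (by rw [hc0]; exact zero_pow hdm)
      have hmor : m = 0 ∨ m = a ∨ m = b ∨ m = a + b := by
        by_contra hmem
        rw [cB, if_neg hmem] at hcm
        exact hcm rfl
      simp only [Finset.mem_insert, Finset.mem_singleton]
      rcases hmor with h | h
      · exact absurd (h ▸ h00) hdm
      · exact h
    rw [Finsupp.sum_of_support_subset d hsupp (fun m e => e • EB a b m)
        (fun x _ => zero_smul ℕ (EB a b x)),
      Finset.sum_insert (by simp only [Finset.mem_insert, Finset.mem_singleton]; omega),
      Finset.sum_insert (by simp only [Finset.mem_singleton]; omega),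
      Finset.sum_singleton, hEBa, hEBb, hEBab] at hcond
    have c0 := DFunLike.congr_fun hcond 0
    have c1 := DFunLike.congr_fun hcond 1
    simp only [Finsupp.add_apply, Finsupp.smul_apply, ee0, ee1, Finsupp.single_apply,
      smul_eq_mul] at c0 c1
    norm_num at c0 c1
    have hd : d = Finsupp.single a (d a) + (Finsupp.single b (d b) +
        Finsupp.single (a + b) (d (a + b))) := by
      conv_lhs => rw [← Finsupp.sum_single d]
      rw [Finsupp.sum_of_support_subset d hsupp Finsupp.single
          (fun x _ => Finsupp.single_zero x),
        Finset.sum_insert (by simp only [Finset.mem_insert, Finset.mem_singleton]; omega),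
        Finset.sum_insert (by simp only [Finset.mem_singleton]; omega),
        Finset.sum_singleton]
    simp only [Finset.mem_insert, Finset.mem_singleton]
    have hcase : (d a = 1 ∧ d b = 1 ∧ d (a + b) = 0) ∨ (d a = 0 ∧ d b = 0 ∧ d (a + b) = 1) := by
      omega
    rcases hcase with ⟨u1, u2, u3⟩ | ⟨u1, u2, u3⟩ <;> rw [u1, u2, u3] at hd
    · left; rw [hd]; simp
    · right; rw [hd]; simp
  -- key LHS now = sum over two monomials
  rw [Finset.sum_insert (by
      intro h
      rw [Finset.mem_singleton] at h
      have := DFunLike.congr_fun h a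
      simp only [Finsupp.add_apply, Finsupp.single_apply] at this
      split_ifs at this <;> omega),
    Finset.sum_singleton] at key
  -- RHS of key
  rw [map_sum (aeval (psiB a b)) _ (Finset.range (a + b + 1)), coeff_sum] at key
  have hrw : ∀ x ∈ Finset.range (a + b + 1),
      coeff (ee0 + ee1) (aeval (psiB a b) (aeval pFst (L x) * aeval pSnd (L (a + b - x)))) =
      coeff (Finsupp.single a 1) (L x) * coeff (Finsupp.single b 1) (L (a + b - x)) := by
    intro x _
    rw [map_mul, comp_aeval_apply pFst (aeval (psiB a b)) (L x),
      comp_aeval_apply pSnd (aeval (psiB a b)) (L (a + b - x)),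
      show (fun m => aeval (psiB a b) (pFst m)) = fun m => monomial (EFB a m) (cFB a m) from
        funext (psiB_pFst ha),
      show (fun m => aeval (psiB a b) (pSnd m)) = fun m => monomial (ESB b m) (cSB b m) from
        funext (psiB_pSnd hb)]
    rw [show (ee0 : Fin 3 →₀ ℕ) + ee1 = Finsupp.single (0 : Fin 3) 1 + Finsupp.single 1 1 from rfl,
      coeff_mul_split {0} {1}
        (by rintro s rfl hs; simp at hs)
        _ _ _ _
        (aeval_mono_support (EFB a) (cFB a) (L x) {0} (by
          intro m s h
          rw [EFB] at h
          split_ifs at h with hm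
          · rw [show (ee0 : Fin 3 →₀ ℕ) = Finsupp.single (0:Fin 3) 1 from rfl] at h
            exact single3_ne h
          · simp at h))
        (aeval_mono_support (ESB b) (cSB b) (L (a + b - x)) {1} (by
          intro m s h
          rw [ESB] at h
          split_ifs at h with hm
          · rw [show (ee1 : Fin 3 →₀ ℕ) = Finsupp.single (1:Fin 3) 1 from rfl] at h
            exact single3_ne h
          · simp at h))
        (fun s h => single3_ne h) (fun s h => single3_ne h)]
    rw [coeff_aeval_one 0 a ha (EFB a) (cFB a) (fun m => rfl) (fun m => rfl) (L x) (hd0 x),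
      coeff_aeval_one 1 b hb (ESB b) (cSB b) (fun m => rfl) (fun m => rfl) (L (a + b - x))
        (hd0 (a + b - x))]
  rw [Finset.sum_congr rfl hrw] at key
  rw [Finset.sum_eq_single_of_mem a (by rw [Finset.mem_range]; omega) (by
      intro x hx hne
      by_contra h
      have hl := left_ne_zero_of_mul h
      have hwx := hwt x _ hl
      rw [Finsupp.sum_single_index (h := fun m e => m * e) (mul_zero a)] at hwx
      omega),
    show a + b - a = b from by omega] at key
  -- assemble
  rw [h2, h1, h1, h1, key]

end IdB

noncomputable section IdA

lemma idA (L : ℕ → MvPolynomial ℕ ℚ) (hL : IsMultiplicativeSeq L)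
    (i j k : ℕ) (hi : 0 < i) (hij : i < j) (hjk : j < k) (hsum : i + j ≠ k) :
    h3 L i j k + h2 L (i + k) j + h2 L (j + k) i = h2 L i j * h1 L k := by
  obtain ⟨hL0, hd0, hwt, hmul⟩ := hL
  set n := i + j + k with hn
  have hEAi : EA i j k i = ee0 := by rw [EA, if_pos rfl]
  have hEAj : EA i j k j = ee1 := by rw [EA, if_neg (by omega), if_pos rfl]
  have hEAk : EA i j k k = ee2 := by rw [EA, if_neg (by omega), if_neg (by omega), if_pos rfl]
  have hEAik : EA i j k (i + k) = ee0 + ee2 := by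
    rw [EA, if_neg (by omega), if_neg (by omega), if_neg (by omega), if_pos rfl]
  have hEAjk : EA i j k (j + k) = ee1 + ee2 := by
    rw [EA, if_neg (by omega), if_neg (by omega), if_neg (by omega), if_neg (by omega),
      if_pos rfl]
  have key : coeff (ee0 + ee1 + ee2) (aeval (psiA i j k) (aeval pProd (L n))) =
      coeff (ee0 + ee1 + ee2) (aeval (psiA i j k)
        (∑ x ∈ Finset.range (n + 1), aeval pFst (L x) * aeval pSnd (L (n - x)))) := by
    rw [hmul n]
  -- LHS of key
  have hEAfun : (fun m => aeval (psiA i j k) (pProd m)) =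
      fun m => monomial (EA i j k m) (cA i j k m) := funext (psiA_pProd hi hij hjk hsum)
  rw [comp_aeval_apply pProd (aeval (psiA i j k)) (L n), hEAfun, coeff_aeval_mono,
    sum_support_eq (L n) _
      {Finsupp.single i 1 + (Finsupp.single j 1 + Finsupp.single k 1),
       Finsupp.single j 1 + Finsupp.single (i + k) 1,
       Finsupp.single i 1 + Finsupp.single (j + k) 1} ?hin ?hone] at key
  case hone =>
    intro d hd
    simp only [Finset.mem_insert, Finset.mem_singleton] at hd
    rcases hd with hd | hd | hd <;> subst hd
    · rw [Finsupp.sum_add_index' (fun x => zero_smul ℕ (EA i j k x))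
          (fun x e1 e2 => add_smul e1 e2 (EA i j k x)),
        Finsupp.sum_add_index' (fun x => zero_smul ℕ (EA i j k x))
          (fun x e1 e2 => add_smul e1 e2 (EA i j k x)),
        Finsupp.sum_single_index (h := fun m e => e • EA i j k m) (zero_smul ℕ (EA i j k i)),
        Finsupp.sum_single_index (h := fun m e => e • EA i j k m) (zero_smul ℕ (EA i j k j)),
        Finsupp.sum_single_index (h := fun m e => e • EA i j k m) (zero_smul ℕ (EA i j k k)),
        hEAi, hEAj, hEAk, one_smul, one_smul, one_smul, if_pos (by abel),
        Finsupp.prod_add_index' (fun x => pow_zero (cA i j k x))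
          (fun x e1 e2 => pow_add (cA i j k x) e1 e2),
        Finsupp.prod_add_index' (fun x => pow_zero (cA i j k x))
          (fun x e1 e2 => pow_add (cA i j k x) e1 e2),
        Finsupp.prod_single_index (h := fun m e => cA i j k m ^ e) (pow_zero (cA i j k i)),
        Finsupp.prod_single_index (h := fun m e => cA i j k m ^ e) (pow_zero (cA i j k j)),
        Finsupp.prod_single_index (h := fun m e => cA i j k m ^ e) (pow_zero (cA i j k k)),
        cA, if_pos (by tauto), cA, if_pos (by tauto), cA, if_pos (by tauto)]
      norm_num
    · rw [Finsupp.sum_add_index' (fun x => zero_smul ℕ (EA i j k x))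
          (fun x e1 e2 => add_smul e1 e2 (EA i j k x)),
        Finsupp.sum_single_index (h := fun m e => e • EA i j k m) (zero_smul ℕ (EA i j k j)),
        Finsupp.sum_single_index (h := fun m e => e • EA i j k m)
          (zero_smul ℕ (EA i j k (i + k))),
        hEAj, hEAik, one_smul, one_smul, if_pos (by abel),
        Finsupp.prod_add_index' (fun x => pow_zero (cA i j k x))
          (fun x e1 e2 => pow_add (cA i j k x) e1 e2),
        Finsupp.prod_single_index (h := fun m e => cA i j k m ^ e) (pow_zero (cA i j k j)),
        Finsupp.prod_single_index (h := fun m e => cA i j k m ^ e)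
          (pow_zero (cA i j k (i + k))),
        cA, if_pos (by tauto), cA, if_pos (by tauto)]
      norm_num
    · rw [Finsupp.sum_add_index' (fun x => zero_smul ℕ (EA i j k x))
          (fun x e1 e2 => add_smul e1 e2 (EA i j k x)),
        Finsupp.sum_single_index (h := fun m e => e • EA i j k m) (zero_smul ℕ (EA i j k i)),
        Finsupp.sum_single_index (h := fun m e => e • EA i j k m)
          (zero_smul ℕ (EA i j k (j + k))),
        hEAi, hEAjk, one_smul, one_smul, if_pos (by abel),
        Finsupp.prod_add_index' (fun x => pow_zero (cA i j k x))
          (fun x e1 e2 => pow_add (cA i j k x) e1 e2),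
        Finsupp.prod_single_index (h := fun m e => cA i j k m ^ e) (pow_zero (cA i j k i)),
        Finsupp.prod_single_index (h := fun m e => cA i j k m ^ e)
          (pow_zero (cA i j k (j + k))),
        cA, if_pos (by tauto), cA, if_pos (by tauto)]
      norm_num
  case hin =>
    intro d hc hI
    have h00 : d 0 = 0 := hd0 n d hc
    by_cases hcond : (d.sum fun m e => e • EA i j k m) = ee0 + ee1 + ee2
    swap
    · rw [if_neg hcond] at hI; exact absurd rfl hI
    rw [if_pos hcond] at hI
    have hsupp : d.support ⊆ ({i, j, k, i + k, j + k} : Finset ℕ) := by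
      intro m hm
      have hdm := Finsupp.mem_support_iff.mp hm
      have hcm : cA i j k m ≠ 0 := by
        intro hc0
        apply hI
        rw [Finsupp.prod]
        exact Finset.prod_eq_zero hm (by rw [hc0]; exact zero_pow hdm)
      have hmor : m = 0 ∨ m = i ∨ m = j ∨ m = k ∨ m = i + k ∨ m = j + k := by
        by_contra hmem
        rw [cA, if_neg hmem] at hcm
        exact hcm rfl
      simp only [Finset.mem_insert, Finset.mem_singleton]
      rcases hmor with h | h
      · exact absurd (h ▸ h00) hdm
      · exact h
    rw [Finsupp.sum_of_support_subset d hsupp (fun m e => e • EA i j k m)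
        (fun x _ => zero_smul ℕ (EA i j k x)),
      Finset.sum_insert (by simp only [Finset.mem_insert, Finset.mem_singleton]; omega),
      Finset.sum_insert (by simp only [Finset.mem_insert, Finset.mem_singleton]; omega),
      Finset.sum_insert (by simp only [Finset.mem_insert, Finset.mem_singleton]; omega),
      Finset.sum_insert (by simp only [Finset.mem_singleton]; omega),
      Finset.sum_singleton, hEAi, hEAj, hEAk, hEAik, hEAjk] at hcond
    have c0 := DFunLike.congr_fun hcond 0
    have c1 := DFunLike.congr_fun hcond 1
    have c2 := DFunLike.congr_fun hcond 2
    simp only [Finsupp.add_apply, Finsupp.smul_apply, ee0, ee1, ee2, Finsupp.single_apply,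
      smul_eq_mul, Fin.ext_iff] at c0 c1 c2
    norm_num at c0 c1 c2
    have hd : d = Finsupp.single i (d i) + (Finsupp.single j (d j) + (Finsupp.single k (d k) +
        (Finsupp.single (i + k) (d (i + k)) + Finsupp.single (j + k) (d (j + k))))) := by
      conv_lhs => rw [← Finsupp.sum_single d]
      rw [Finsupp.sum_of_support_subset d hsupp Finsupp.single
          (fun x _ => Finsupp.single_zero x),
        Finset.sum_insert (by simp only [Finset.mem_insert, Finset.mem_singleton]; omega),
        Finset.sum_insert (by simp only [Finset.mem_insert, Finset.mem_singleton]; omega),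
        Finset.sum_insert (by simp only [Finset.mem_insert, Finset.mem_singleton]; omega),
        Finset.sum_insert (by simp only [Finset.mem_singleton]; omega),
        Finset.sum_singleton]
    simp only [Finset.mem_insert, Finset.mem_singleton]
    have hcase : (d i = 1 ∧ d j = 1 ∧ d k = 1 ∧ d (i + k) = 0 ∧ d (j + k) = 0) ∨
        (d i = 0 ∧ d j = 1 ∧ d k = 0 ∧ d (i + k) = 1 ∧ d (j + k) = 0) ∨
        (d i = 1 ∧ d j = 0 ∧ d k = 0 ∧ d (i + k) = 0 ∧ d (j + k) = 1) := by
      omega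
    rcases hcase with ⟨u1, u2, u3, u4, u5⟩ | ⟨u1, u2, u3, u4, u5⟩ | ⟨u1, u2, u3, u4, u5⟩ <;>
      rw [u1, u2, u3, u4, u5] at hd
    · left; rw [hd]; simp
    · right; left; rw [hd]; simp
    · right; right; rw [hd]; simp
  -- expand the T-sum
  rw [Finset.sum_insert (by
      simp only [Finset.mem_insert, Finset.mem_singleton]
      rintro (h | h)
      · have := DFunLike.congr_fun h k
        simp only [Finsupp.add_apply, Finsupp.single_apply] at this
        split_ifs at this <;> omega
      · have := DFunLike.congr_fun h k
        simp only [Finsupp.add_apply, Finsupp.single_apply] at this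
        split_ifs at this <;> omega),
    Finset.sum_insert (by
      intro h
      rw [Finset.mem_singleton] at h
      have := DFunLike.congr_fun h i
      simp only [Finsupp.add_apply, Finsupp.single_apply] at this
      split_ifs at this <;> omega),
    Finset.sum_singleton] at key
  -- RHS of key
  rw [map_sum (aeval (psiA i j k)) _ (Finset.range (n + 1)), coeff_sum] at key
  have hrw : ∀ x ∈ Finset.range (n + 1),
      coeff (ee0 + ee1 + ee2) (aeval (psiA i j k) (aeval pFst (L x) * aeval pSnd (L (n - x)))) =
      coeff (Finsupp.single i 1 + Finsupp.single j 1) (L x) *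
        coeff (Finsupp.single k 1) (L (n - x)) := by
    intro x _
    rw [map_mul, comp_aeval_apply pFst (aeval (psiA i j k)) (L x),
      comp_aeval_apply pSnd (aeval (psiA i j k)) (L (n - x)),
      show (fun m => aeval (psiA i j k) (pFst m)) = fun m => monomial (EF i j m) (cF i j m) from
        funext (psiA_pFst hi hij),
      show (fun m => aeval (psiA i j k) (pSnd m)) = fun m => monomial (ES k m) (cS k m) from
        funext (psiA_pSnd hi hij hjk)]
    rw [coeff_mul_split {0, 1} {2}
        (by rintro s (rfl | rfl) hs <;> exact absurd hs (by decide))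
        _ _ (ee0 + ee1) ee2
        (aeval_mono_support (EF i j) (cF i j) (L x) {0, 1} (by
          intro m s h
          rw [EF] at h
          split_ifs at h with hm1 hm2
          · rw [show (ee0 : Fin 3 →₀ ℕ) = Finsupp.single (0 : Fin 3) 1 from rfl] at h
            rw [single3_ne h]; exact Set.mem_insert _ _
          · rw [show (ee1 : Fin 3 →₀ ℕ) = Finsupp.single (1 : Fin 3) 1 from rfl] at h
            rw [single3_ne h]; exact Set.mem_insert_of_mem _ rfl
          · simp at h))
        (aeval_mono_support (ES k) (cS k) (L (n - x)) {2} (by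
          intro m s h
          rw [ES] at h
          split_ifs at h with hm
          · rw [show (ee2 : Fin 3 →₀ ℕ) = Finsupp.single (2 : Fin 3) 1 from rfl] at h
            exact single3_ne h
          · simp at h))
        (by
          intro s h
          rw [Finsupp.add_apply] at h
          by_cases h0 : (ee0 : Fin 3 →₀ ℕ) s = 0
          · have h1 : (ee1 : Fin 3 →₀ ℕ) s ≠ 0 := by omega
            rw [show (ee1 : Fin 3 →₀ ℕ) = Finsupp.single (1 : Fin 3) 1 from rfl] at h1
            rw [single3_ne h1]; exact Set.mem_insert_of_mem _ rfl
          · rw [show (ee0 : Fin 3 →₀ ℕ) = Finsupp.single (0 : Fin 3) 1 from rfl] at h0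
            rw [single3_ne h0]; exact Set.mem_insert _ _)
        (fun s h => single3_ne h)]
    rw [show (ee0 : Fin 3 →₀ ℕ) + ee1 = Finsupp.single (0 : Fin 3) 1 + Finsupp.single 1 1
        from rfl,
      show (ee2 : Fin 3 →₀ ℕ) = Finsupp.single (2 : Fin 3) 1 from rfl]
    rw [coeff_aeval_two 0 1 (by decide) i j hi (by omega) (by omega) (EF i j) (cF i j)
        (fun m => rfl) (fun m => rfl) (L x) (hd0 x),
      coeff_aeval_one 2 k (by omega) (ES k) (cS k) (fun m => rfl) (fun m => rfl) (L (n - x))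
        (hd0 (n - x))]
  rw [Finset.sum_congr rfl hrw] at key
  rw [Finset.sum_eq_single_of_mem (i + j) (by rw [Finset.mem_range]; omega) (by
      intro x hx hne
      by_contra h
      have hl := left_ne_zero_of_mul h
      have hwx := hwt x _ hl
      rw [Finsupp.sum_add_index' (fun y => mul_zero y) (fun y e1 e2 => mul_add y e1 e2),
        Finsupp.sum_single_index (h := fun m e => m * e) (mul_zero i),
        Finsupp.sum_single_index (h := fun m e => m * e) (mul_zero j)] at hwx
      omega),
    show n - (i + j) = k from by omega] at key
  -- assemble
  rw [h3, h2, h2, h2, h1]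
  rw [add_assoc (Finsupp.single i 1) (Finsupp.single j 1) (Finsupp.single k 1),
    add_comm (Finsupp.single (i + k) 1) (Finsupp.single j 1),
    add_comm (Finsupp.single (j + k) 1) (Finsupp.single i 1),
    show i + k + j = n from by omega, show j + k + i = n from by omega]
  linarith [key]

end IdA

/-- For positive integers `i < j < k` with `i + j ≠ k`, the coefficients of the
Hirzebruch `L`-polynomials (or of any multiplicative sequence) satisfy
`h_{i,j,k} + h_{i+j,k} + h_{i+k,j} + h_{j+k,i} + h_{i+j+k} = h_i h_j h_k`. -/
theorem h3_identity (L : ℕ → MvPolynomial ℕ ℚ) (hL : IsMultiplicativeSeq L)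
    (i j k : ℕ) (hi : 0 < i) (hij : i < j) (hjk : j < k) (hsum : i + j ≠ k) :
    h3 L i j k + h2 L (i + j) k + h2 L (i + k) j + h2 L (j + k) i + h1 L (i + j + k) =
      h1 L i * h1 L j * h1 L k := by
  have A := idA L hL i j k hi hij hjk hsum
  have B1 := idB L hL i j hi (by omega) (by omega)
  have B2 := idB L hL (i + j) k (by omega) (by omega) hsum
  linear_combination A + B2 + h1 L k * B1
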